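/- Let f be a Boolean network without positive cycles whose interaction graph G(f) has an initial non-trivial strongly connected component. Then f has no fixed points. -/

import Mathlib

open scoped Classical

abbrev BNState (n : ℕ) := Fin n → Bool

def posArc {n : ℕ} (f : BNState n → BNState n) (u v : Fin n) : Prop :=
  ∃ x : BNState n, x u = false ∧ f x v = false ∧ f (Function.update x u true) v = true

def negArc {n : ℕ} (f : BNState n → BNState n) (u v : Fin n) : Prop :=
  ∃ x : BNState n, x u = false ∧ f x v = true ∧ f (Function.update x u true) v = false

def arcSign {n : ℕ} (f : BNState n → BNState n) (u v : Fin n) (s : ℤ) : Prop :=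
  (s = 1 ∧ posArc f u v) ∨ (s = -1 ∧ negArc f u v)

/-- There is a cycle of positive sign in `G(f)` avoiding the vertex set `P`. -/
def hasPosCycleOutside {n : ℕ} (f : BNState n → BNState n) (P : Set (Fin n)) : Prop :=
  ∃ (m : ℕ) (v : Fin (m+1) → Fin n) (s : Fin (m+1) → ℤ),
    Function.Injective v ∧ (∀ i, v i ∉ P) ∧
    (∀ i, arcSign f (v i) (v (i+1)) (s i)) ∧ (∏ i, s i) = 1

/-- There is a cycle (of any sign) in `G(f)` avoiding the vertex set `F`. -/
def hasCycleOutside {n : ℕ} (f : BNState n → BNState n) (F : Set (Fin n)) : Prop :=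
  ∃ (m : ℕ) (v : Fin (m+1) → Fin n) (s : Fin (m+1) → ℤ),
    Function.Injective v ∧ (∀ i, v i ∉ F) ∧
    (∀ i, arcSign f (v i) (v (i+1)) (s i))

/-- `(IC f k).1` is the set `I_k(f)` of components fixed at iteration `k`,
and `(IC f k).2` records the constant values `c_v` (arbitrary off `I_k(f)`). -/
noncomputable def IC {n : ℕ} (f : BNState n → BNState n) :
    ℕ → Set (Fin n) × (Fin n → Bool)
  | 0 => (∅, fun _ => false)
  | k+1 =>
    let I := (IC f k).1
    let c := (IC f k).2
    let g : BNState n → BNState n := fun x => f (fun u => if u ∈ I then c u else x u)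
    ({v | ∀ x y, g x v = g y v}, fun v => g (fun _ => false) v)

/-- The network `f^{I_k}` obtained from `f` by clamping the components of `I_k(f)`. -/
noncomputable def fI {n : ℕ} (f : BNState n → BNState n) (k : ℕ) :
    BNState n → BNState n :=
  fun x => f (fun u => if u ∈ (IC f k).1 then (IC f k).2 u else x u)

/-- Partial evaluation `f^u`: update only component `u`. -/
def seqStep {n : ℕ} (f : BNState n → BNState n) (u : Fin n) (x : BNState n) : BNState n :=
  Function.update x u (f x u)

/-- Sequential update `f^π = f^{π_n} ∘ ⋯ ∘ f^{π_1}`. -/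
def seqUpdate {n : ℕ} (f : BNState n → BNState n) (π : Equiv.Perm (Fin n))
    (x : BNState n) : BNState n :=
  (List.ofFn (fun i => π i)).foldl (fun y u => seqStep f u y) x

/-- Adjacency (unsigned) in the interaction graph. -/
def adjBN {n : ℕ} (g : BNState n → BNState n) (u v : Fin n) : Prop :=
  posArc g u v ∨ negArc g u v

/-- Reachability in the interaction graph. -/
def reachBN {n : ℕ} (g : BNState n → BNState n) : Fin n → Fin n → Prop :=
  Relation.ReflTransGen (adjBN g)

/-- The strongly connected component of `u`. -/
def sccBN {n : ℕ} (g : BNState n → BNState n) (u : Fin n) : Set (Fin n) :=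
  {w | reachBN g u w ∧ reachBN g w u}

/-- The SCC of `u` is non-trivial: it contains an arc. -/
def nontrivialSCC {n : ℕ} (g : BNState n → BNState n) (u : Fin n) : Prop :=
  ∃ a b : Fin n, a ∈ sccBN g u ∧ b ∈ sccBN g u ∧ adjBN g a b

/-- The SCC of `u` is initial: no arc enters it from outside. -/
def initialSCC {n : ℕ} (g : BNState n → BNState n) (u : Fin n) : Prop :=
  ∀ w v : Fin n, v ∈ sccBN g u → adjBN g w v → w ∈ sccBN g u

-- AUX START
/-- flip the coordinates in `l` one at a time -/
def flipL {n : ℕ} : List (Fin n) → BNState n → BNState n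
  | [], x => x
  | w :: t, x => flipL t (Function.update x w (!(x w)))

lemma flipL_eq {n : ℕ} (l : List (Fin n)) (hl : l.Nodup) (x : BNState n) :
    flipL l x = fun i => if i ∈ l then !(x i) else x i := by
  induction l generalizing x with
  | nil => funext i; simp [flipL]
  | cons w t ih =>
      have hw : w ∉ t := (List.nodup_cons.mp hl).1
      rw [flipL, ih (List.nodup_cons.mp hl).2]
      funext i
      by_cases hiw : i = w
      · subst hiw
        simp [hw, Function.update_self]
      · simp [Function.update_of_ne hiw, hiw]

/-- first-change lemma -/
lemma exists_change {n : ℕ} (f : BNState n → BNState n) (v : Fin n) :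
    ∀ (l : List (Fin n)), l.Nodup → ∀ x : BNState n, f x v ≠ f (flipL l x) v →
    ∃ w ∈ l, ∃ x' : BNState n, x' w = x w ∧ f x' v = f x v ∧
      f (Function.update x' w (!(x w))) v = !(f x v) := by
  intro l
  induction l with
  | nil => intro _ x hne; exact absurd rfl hne
  | cons w t ih =>
      intro hl x hne
      set x1 := Function.update x w (!(x w)) with hx1
      have hflip : flipL (w :: t) x = flipL t x1 := rfl
      by_cases h1 : f x1 v = f x v
      · have hne' : f x1 v ≠ f (flipL t x1) v := by
          rw [h1]; rw [hflip] at hne; exact hne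
        obtain ⟨w', hw', x'', h2, h3, h4⟩ := ih (List.nodup_cons.mp hl).2 x1 hne'
        have hww' : w' ≠ w := by
          rintro rfl; exact (List.nodup_cons.mp hl).1 hw'
        have hx1w' : x1 w' = x w' := Function.update_of_ne hww' _ _
        refine ⟨w', List.mem_cons_of_mem _ hw', x'', ?_, ?_, ?_⟩
        · rw [h2, hx1w']
        · rw [h3, h1]
        · rw [hx1w'] at h4; rw [h4, h1]
      · have h2 : f x1 v = !(f x v) := by
          cases hb : f x v <;> cases hb1 : f x1 v <;> simp_all
        exact ⟨w, List.mem_cons_self, x, rfl, rfl, h2⟩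

lemma change_between {n : ℕ} (f : BNState n → BNState n) (v : Fin n)
    (x z : BNState n) (h : ¬ f x v = f z v) :
    ∃ w, ¬ (x w = z w) ∧ ∃ x' : BNState n, x' w = x w ∧ f x' v = f x v ∧
      f (Function.update x' w (!(x w))) v = !(f x v) := by
  set l := (Finset.univ.filter (fun w => ¬ (x w = z w))).toList with hldef
  have hnodup : l.Nodup := Finset.nodup_toList _
  have hmem : ∀ i, i ∈ l ↔ ¬ (x i = z i) := by
    intro i; rw [hldef, Finset.mem_toList, Finset.mem_filter]; simp
  have hflip : flipL l x = z := by
    rw [flipL_eq l hnodup x]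
    funext i
    by_cases hi : x i = z i
    · simp [hmem, hi]
    · have : (!(x i)) = z i := by
        cases hb : x i <;> cases hb2 : z i <;> simp_all
      simp [hmem, hi, this]
  have hne : f x v ≠ f (flipL l x) v := by rw [hflip]; exact h
  obtain ⟨w, hw, x', h1, h2, h3⟩ := exists_change f v l hnodup x hne
  exact ⟨w, (hmem w).mp hw, x', h1, h2, h3⟩

lemma arcSign_of_change {n : ℕ} (f : BNState n → BNState n) (w v : Fin n)
    (x' : BNState n) (a c : Bool) (h1 : x' w = a) (h2 : f x' v = c)
    (h3 : f (Function.update x' w (!a)) v = !c) :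
    arcSign f w v ((if a then 1 else -1) * (if c then 1 else -1)) := by
  have key : Function.update (Function.update x' w (!a)) w true = Function.update x' w true := by
    rw [Function.update_idem]
  cases a with
  | false =>
      cases c with
      | false =>
          refine Or.inl ⟨by norm_num, x', h1, h2, ?_⟩
          simpa using h3
      | true =>
          refine Or.inr ⟨by norm_num, x', h1, h2, ?_⟩
          simpa using h3
  | true =>
      have hx'' : (Function.update x' w (!true)) w = false := by simp
      have hupd : Function.update x' w true = x' := by
        rw [← h1]; exact Function.update_eq_self _ _
      cases c with
      | false =>
          refine Or.inr ⟨by norm_num, Function.update x' w (!true), hx'', by simpa using h3, ?_⟩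
          rw [key, hupd, h2]
      | true =>
          refine Or.inl ⟨by norm_num, Function.update x' w (!true), hx'', by simpa using h3, ?_⟩
          rw [key, hupd, h2]

lemma adj_of_change {n : ℕ} (f : BNState n → BNState n) (w v : Fin n)
    (x' : BNState n) (h : f x' v ≠ f (Function.update x' w (!(x' w))) v) :
    adjBN f w v := by
  have := arcSign_of_change f w v x' (x' w) (f x' v) rfl rfl (by
    cases hb : f (Function.update x' w (!(x' w))) v <;> cases hb2 : f x' v <;> simp_all)
  rcases this with ⟨_, h⟩ | ⟨_, h⟩
  · exact Or.inl h
  · exact Or.inr h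

/-- independence: if `v` has no arc from outside `S`, then `f · v` depends only on `S`. -/
lemma indep_off {n : ℕ} (f : BNState n → BNState n) (v : Fin n) (S : Set (Fin n))
    (hS : ∀ w, w ∉ S → ¬ adjBN f w v) (x z : BNState n)
    (hxz : ∀ w ∈ S, x w = z w) : f x v = f z v := by
  by_contra h
  obtain ⟨w, hwne, x', h1, h2, h3⟩ := change_between f v x z h
  have hwS : w ∉ S := fun hws => hwne (hxz w hws)
  apply hS w hwS
  apply adj_of_change f w v x'
  rw [h1, h2, h3]
  cases f x v <;> simp

/-- every vertex of a nontrivial SCC has an in-neighbor in the SCC. -/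
lemma in_nbr {n : ℕ} (f : BNState n → BNState n) (u : Fin n)
    (hnt : nontrivialSCC f u) :
    ∀ v ∈ sccBN f u, ∃ w ∈ sccBN f u, adjBN f w v := by
  obtain ⟨a, b, ha, hb, hab⟩ := hnt
  have key : ∀ p v : Fin n, p ∈ sccBN f u → v ∈ sccBN f u → reachBN f p v →
      v = p ∨ ∃ w ∈ sccBN f u, adjBN f w v := by
    intro p v hp hv hr
    rcases Relation.ReflTransGen.cases_tail hr with heq | ⟨c, hpc, hcv⟩
    · exact Or.inl heq
    · refine Or.inr ⟨c, ⟨hp.1.trans hpc, Relation.ReflTransGen.trans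
        (Relation.ReflTransGen.single hcv) hv.2⟩, hcv⟩
  intro v hv
  have hbv : reachBN f b v := hb.2.trans hv.1
  rcases key b v hb hv hbv with heq1 | hdone
  · subst heq1
    have hab' : reachBN f a v := ha.2.trans hv.1
    rcases key a v ha hv hab' with heq2 | hdone2
    · subst heq2
      exact ⟨v, hv, hab⟩
    · exact hdone2
  · exact hdone

def tauB {n : ℕ} (y : BNState n) (w : Fin n) : ℤ := if y w then 1 else -1

lemma tauB_mul_self {n : ℕ} (y : BNState n) (w : Fin n) : tauB y w * tauB y w = 1 := by
  unfold tauB; split <;> norm_num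
-- AUX END

/-- A BN without positive cycles whose interaction graph has an initial
non-trivial strongly connected component has no fixed points. -/
theorem no_fixedPoint_of_initial_nontrivial_scc {n : ℕ} (f : BNState n → BNState n)
    (hpos : ¬ hasPosCycleOutside f (∅ : Set (Fin n)))
    (u : Fin n) (hnt : nontrivialSCC f u) (hin : initialSCC f u) :
    ¬ ∃ y : BNState n, f y = y := by
  rintro ⟨y, hy⟩
  have hfy : ∀ v, f y v = y v := fun v => by rw [hy]
  set S := sccBN f u with hSdef
  have hout : ∀ v ∈ S, ∀ w, w ∉ S → ¬ adjBN f w v :=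
    fun v hv w hw hadj => hw (hin w v hv hadj)
  -- every vertex of S has an in-neighbor in S via an arc of sign τ(w)·τ(v)
  have hstep : ∀ v ∈ S, ∃ w, w ∈ S ∧ arcSign f w v (tauB y w * tauB y v) := by
    intro v hv
    obtain ⟨w0, hw0S, hw0⟩ := in_nbr f u hnt v hv
    have hx0 : ∃ x0 : BNState n, ¬ (f x0 v = y v) := by
      cases hyv : y v with
      | false =>
          rcases hw0 with ⟨x, -, h1, h2⟩ | ⟨x, -, h1, h2⟩
          · exact ⟨Function.update x w0 true, by rw [h2]; simp [hyv]⟩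
          · exact ⟨x, by rw [h1]; simp [hyv]⟩
      | true =>
          rcases hw0 with ⟨x, -, h1, h2⟩ | ⟨x, -, h1, h2⟩
          · exact ⟨x, by rw [h1]; simp [hyv]⟩
          · exact ⟨Function.update x w0 true, by rw [h2]; simp [hyv]⟩
    obtain ⟨x0, hx0⟩ := hx0
    set z : BNState n := fun i => if i ∈ S then x0 i else y i with hzdef
    have hz1 : f z v = f x0 v := by
      apply indep_off f v S (hout v hv)
      intro w hw
      simp [hzdef, hw]
    have hzne : ¬ (f y v = f z v) := by
      rw [hz1, hfy v]
      exact fun he => hx0 he.symm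
    obtain ⟨w, hwne, x', h1, h2, h3⟩ := change_between f v y z hzne
    have hwS : w ∈ S := by
      by_contra hw
      apply hwne
      simp [hzdef, hw]
    refine ⟨w, hwS, ?_⟩
    have h2' : f x' v = y v := h2.trans (hfy v)
    have h3' : f (Function.update x' w (!(y w))) v = !(y v) := by
      rw [h3, hfy v]
    exact arcSign_of_change f w v x' (y w) (y v) h1 h2' h3'
  -- iterate the in-neighbor map
  have hφex : ∀ v : Fin n, ∃ w : Fin n, v ∈ S → w ∈ S ∧ arcSign f w v (tauB y w * tauB y v) := by
    intro v
    by_cases hv : v ∈ S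
    · obtain ⟨w, hw⟩ := hstep v hv
      exact ⟨w, fun _ => hw⟩
    · exact ⟨u, fun h => absurd h hv⟩
  choose φ hφ using hφex
  have huS : u ∈ S := ⟨Relation.ReflTransGen.refl, Relation.ReflTransGen.refl⟩
  set g : ℕ → Fin n := fun k => φ^[k] u with hgdef
  have hgsucc : ∀ k, g (k+1) = φ (g k) := fun k => Function.iterate_succ_apply' φ k u
  have hgS : ∀ k, g k ∈ S := by
    intro k
    induction k with
    | zero => exact huS
    | succ k ih => rw [hgsucc]; exact (hφ (g k) ih).1
  have harc : ∀ k, arcSign f (g (k+1)) (g k) (tauB y (g (k+1)) * tauB y (g k)) := by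
    intro k
    rw [hgsucc]
    exact (hφ (g k) (hgS k)).2
  -- pigeonhole: g is not injective on Fin (n+1)
  have hnotinj : ¬ Function.Injective (fun k : Fin (n+1) => g k) := by
    intro hinj
    have := Fintype.card_le_of_injective _ hinj
    simp at this
  obtain ⟨a, b, hgab, hab⟩ := Function.not_injective_iff.mp hnotinj
  have hex : ∃ j : ℕ, ∃ i : ℕ, i < j ∧ g i = g j := by
    rcases lt_trichotomy a.val b.val with h | h | h
    · exact ⟨b.val, a.val, h, hgab⟩
    · exact absurd (Fin.ext h) hab
    · exact ⟨a.val, b.val, h, hgab.symm⟩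
  set j := Nat.find hex with hjdef
  obtain ⟨i, hij, hgij⟩ := Nat.find_spec hex
  have hwin : ∀ p q, i ≤ p → p < j → i ≤ q → q < j → g p = g q → p = q := by
    intro p q hp hpj hq hqj he
    by_contra hne
    rcases lt_or_gt_of_ne hne with hlt | hgt
    · exact Nat.find_min hex hqj ⟨p, hlt, he⟩
    · exact Nat.find_min hex hpj ⟨q, hgt, he.symm⟩
  set m := j - i - 1 with hmdef
  have hj : j = i + m + 1 := by omega
  apply hpos
  refine ⟨m, fun t => g (i + m - t.val),
      fun t => tauB y (g (i + m - t.val)) * tauB y (g (i + m - ((t+1 : Fin (m+1))).val)),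
      ?_, ?_, ?_, ?_⟩
  · intro t t' he
    simp only at he
    have h1 : t.val < m + 1 := t.isLt
    have h1' : t'.val < m + 1 := t'.isLt
    have := hwin (i + m - t.val) (i + m - t'.val) (by omega) (by omega) (by omega) (by omega) he
    exact Fin.ext (by omega)
  · intro t
    exact Set.notMem_empty _
  · intro t
    simp only
    by_cases htm : t.val = m
    · have hlast : t = Fin.last m := Fin.ext htm
      have h1 : ((t+1 : Fin (m+1))).val = 0 := by
        rw [Fin.val_add_one, if_pos hlast]
      have e1 : i + m - t.val = i := by omega
      rw [h1, e1, Nat.sub_zero]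
      have := harc (i + m)
      rw [← hj, ← hgij] at this
      · exact this
    · have hlast : t ≠ Fin.last m := fun he => htm (by rw [he]; rfl)
      have h1 : ((t+1 : Fin (m+1))).val = t.val + 1 := by
        rw [Fin.val_add_one, if_neg hlast]
      have h2 : t.val < m := by
        have := t.isLt; omega
      have e1 : i + m - (t.val + 1) + 1 = i + m - t.val := by omega
      rw [h1]
      have := harc (i + m - (t.val + 1))
      rw [e1] at this
      exact this
  · rw [Finset.prod_mul_distrib]
    have hre : (∏ t : Fin (m+1), tauB y (g (i + m - ((t+1 : Fin (m+1))).val)))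
        = ∏ t : Fin (m+1), tauB y (g (i + m - t.val)) := by
      exact Fintype.prod_equiv (Equiv.addRight (1 : Fin (m+1)))
        (fun t => tauB y (g (i + m - ((t+1 : Fin (m+1))).val)))
        (fun t => tauB y (g (i + m - t.val))) (fun t => rfl)
    rw [hre, ← Finset.prod_mul_distrib]
    have : ∀ t : Fin (m+1), tauB y (g (i + m - t.val)) * tauB y (g (i + m - t.val)) = 1 :=
      fun t => tauB_mul_self y _
    rw [Finset.prod_congr rfl (fun t _ => this t)]
    simp
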